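/- Let M > 0, let P = (0, 0, P₃) ∈ ℝ³ with |P₃| < M, let 0 ≤ σ ≤ Λ, and let j, j' ∈ {1,2,3} with j ≠ j'. Then Σ_{λ=1,2} ∫_{ℝ³} 1_{|k|≥σ}(k) · conj(h^B_j(0,k,λ)) · h^B_{j'}(0,k,λ) / (|k| − (k·P)/M + |k|²/(2M)) dk = 0, where the integrand is Lebesgue integrable (it is defined for almost every k). -/

import Mathlib

noncomputable section

/-- ℝ³ with the Euclidean norm. -/
abbrev R3 := EuclideanSpace ℝ (Fin 3)

/-- Build a vector of ℝ³ from its three coordinates. -/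
def vec (x y z : ℝ) : R3 := (WithLp.equiv 2 (Fin 3 → ℝ)).symm ![x, y, z]

/-- The cross product on ℝ³. -/
def cross (a b : R3) : R3 :=
  vec (a 1 * b 2 - a 2 * b 1) (a 2 * b 0 - a 0 * b 2) (a 0 * b 1 - a 1 * b 0)

/-- The first polarization vector `ε¹(k) = (k₂, −k₁, 0)/√(k₁²+k₂²)`. -/
def eps1 (k : R3) : R3 := (Real.sqrt (k 0 ^ 2 + k 1 ^ 2))⁻¹ • vec (k 1) (-(k 0)) 0

/-- The second polarization vector `ε²(k) = (k/|k|) × ε¹(k)`. -/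
def eps2 (k : R3) : R3 := cross (‖k‖⁻¹ • k) (eps1 k)

/-- The polarization vectors indexed by `λ ∈ {1,2}`. -/
def eps (k : R3) : Fin 2 → R3 := ![eps1 k, eps2 k]

/-- The ultraviolet cutoff function `χ_Λ(k) = 1_{|k| ≤ Λ}(k)`. -/
def chi (Λ : ℝ) (k : R3) : ℝ := if ‖k‖ ≤ Λ then 1 else 0

/-- The coupling function
`h^A_j(x,k,λ) = (1/(2π)) (χ_Λ(k)/|k|^{1/2}) ε^λ_j(k) e^{−i k·x}`. -/
def hA (Λ : ℝ) (x k : R3) (lam : Fin 2) (j : Fin 3) : ℂ :=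
  (((1 / (2 * Real.pi)) * (chi Λ k / ‖k‖ ^ ((1 : ℝ) / 2)) * eps k lam j : ℝ) : ℂ) *
    Complex.exp (-Complex.I * ((inner ℝ k x : ℝ) : ℂ))

/-- The coupling function
`h^B_j(x,k,λ) = −(i/(2π)) |k|^{1/2} χ_Λ(k) ((k/|k|) × ε^λ(k))_j e^{−i k·x}`. -/
def hB (Λ : ℝ) (x k : R3) (lam : Fin 2) (j : Fin 3) : ℂ :=
  -(Complex.I / ((2 * Real.pi : ℝ) : ℂ)) *
    ((‖k‖ ^ ((1 : ℝ) / 2) * chi Λ k * cross (‖k‖⁻¹ • k) (eps k lam) j : ℝ) : ℂ) *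
    Complex.exp (-Complex.I * ((inner ℝ k x : ℝ) : ℂ))

/-! ### Auxiliary lemmas -/


lemma cross_apply0 (a b : R3) : cross a b 0 = a 1 * b 2 - a 2 * b 1 := rfl
lemma cross_apply1 (a b : R3) : cross a b 1 = a 2 * b 0 - a 0 * b 2 := rfl
lemma cross_apply2 (a b : R3) : cross a b 2 = a 0 * b 1 - a 1 * b 0 := rfl
lemma eps1_apply0 (k : R3) : eps1 k 0 = (Real.sqrt (k 0 ^ 2 + k 1 ^ 2))⁻¹ * k 1 := rfl
lemma eps1_apply1 (k : R3) : eps1 k 1 = (Real.sqrt (k 0 ^ 2 + k 1 ^ 2))⁻¹ * -(k 0) := rfl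
lemma eps1_apply2 (k : R3) : eps1 k 2 = (Real.sqrt (k 0 ^ 2 + k 1 ^ 2))⁻¹ * 0 := rfl
lemma smul_apply3 (c : ℝ) (v : R3) (i : Fin 3) : (c • v) i = c * v i := rfl

lemma norm_sq_eq (k : R3) : ‖k‖^2 = k 0^2 + k 1^2 + k 2^2 := by
  rw [EuclideanSpace.norm_eq, Real.sq_sqrt (by positivity)]
  simp [Fin.sum_univ_three, sq_abs]

lemma norm_pos_of_perp (k : R3) (hk : 0 < k 0 ^ 2 + k 1 ^ 2) : 0 < ‖k‖ := by
  have hn2 := norm_sq_eq k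
  nlinarith [norm_nonneg k, sq_nonneg (k 2)]

lemma coord_abs_le (k : R3) (i : Fin 3) : |k i| ≤ ‖k‖ := by
  have hn2 := norm_sq_eq k
  have h0 := norm_nonneg k
  fin_cases i
  · show |k 0| ≤ ‖k‖
    nlinarith [sq_abs (k 0), abs_nonneg (k 0), sq_nonneg (k 1), sq_nonneg (k 2)]
  · show |k 1| ≤ ‖k‖
    nlinarith [sq_abs (k 1), abs_nonneg (k 1), sq_nonneg (k 0), sq_nonneg (k 2)]
  · show |k 2| ≤ ‖k‖
    nlinarith [sq_abs (k 2), abs_nonneg (k 2), sq_nonneg (k 0), sq_nonneg (k 1)]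

lemma khat_abs_le (k : R3) (i : Fin 3) : |(‖k‖⁻¹ • k) i| ≤ 1 := by
  rw [smul_apply3, abs_mul, abs_inv, abs_norm]
  rcases eq_or_lt_of_le (norm_nonneg k) with h | h
  · rw [← h]; simp
  · rw [inv_mul_le_iff₀ h, mul_one]
    exact coord_abs_le k i

lemma eps1_abs_le (k : R3) (i : Fin 3) : |eps1 k i| ≤ 1 := by
  have hρ : 0 ≤ k 0 ^ 2 + k 1 ^ 2 := by positivity
  have hr2 : Real.sqrt (k 0 ^ 2 + k 1 ^ 2) ^ 2 = k 0 ^ 2 + k 1 ^ 2 := Real.sq_sqrt hρ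
  have hrnn : 0 ≤ Real.sqrt (k 0 ^ 2 + k 1 ^ 2) := Real.sqrt_nonneg _
  rcases eq_or_lt_of_le hrnn with h | h
  · have h0 : (Real.sqrt (k 0 ^ 2 + k 1 ^ 2))⁻¹ = 0 := by rw [← h]; simp
    fin_cases i
    · show |eps1 k 0| ≤ 1
      simp [eps1_apply0, h0]
    · show |eps1 k 1| ≤ 1
      simp [eps1_apply1, h0]
    · show |eps1 k 2| ≤ 1
      simp [eps1_apply2, h0]
  · have hb0 : |k 0| ≤ Real.sqrt (k 0 ^ 2 + k 1 ^ 2) := by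
      nlinarith [sq_abs (k 0), abs_nonneg (k 0), sq_nonneg (k 1)]
    have hb1 : |k 1| ≤ Real.sqrt (k 0 ^ 2 + k 1 ^ 2) := by
      nlinarith [sq_abs (k 1), abs_nonneg (k 1), sq_nonneg (k 0)]
    fin_cases i
    · show |eps1 k 0| ≤ 1
      rw [eps1_apply0, abs_mul, abs_inv, abs_of_pos h, inv_mul_le_iff₀ h, mul_one]; exact hb1
    · show |eps1 k 1| ≤ 1
      rw [eps1_apply1, abs_mul, abs_inv, abs_of_pos h, inv_mul_le_iff₀ h, mul_one, abs_neg]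
      exact hb0
    · show |eps1 k 2| ≤ 1
      simp [eps1_apply2]

lemma eps2_abs_le (k : R3) (i : Fin 3) : |eps2 k i| ≤ 2 := by
  have h1 := khat_abs_le k
  have h2 := eps1_abs_le k
  have key : ∀ a b c d : ℝ, |a| ≤ 1 → |b| ≤ 1 → |c| ≤ 1 → |d| ≤ 1 →
      |a * b - c * d| ≤ 2 := by
    intro a b c d ha hb hc hd
    calc |a * b - c * d| ≤ |a * b| + |c * d| := abs_sub _ _
    _ = |a| * |b| + |c| * |d| := by rw [abs_mul, abs_mul]
    _ ≤ 1 * 1 + 1 * 1 := by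
        gcongr <;> first | exact abs_nonneg _ | assumption
    _ = 2 := by norm_num
  fin_cases i
  · show |eps2 k 0| ≤ 2
    rw [show eps2 k 0 = cross (‖k‖⁻¹ • k) (eps1 k) 0 from rfl, cross_apply0]
    exact key _ _ _ _ (h1 1) (h2 2) (h1 2) (h2 1)
  · show |eps2 k 1| ≤ 2
    rw [show eps2 k 1 = cross (‖k‖⁻¹ • k) (eps1 k) 1 from rfl, cross_apply1]
    exact key _ _ _ _ (h1 2) (h2 0) (h1 0) (h2 2)
  · show |eps2 k 2| ≤ 2
    rw [show eps2 k 2 = cross (‖k‖⁻¹ • k) (eps1 k) 2 from rfl, cross_apply2]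
    exact key _ _ _ _ (h1 0) (h2 1) (h1 1) (h2 0)

lemma eps_abs_le (k : R3) (lam : Fin 2) (i : Fin 3) : |eps k lam i| ≤ 2 := by
  fin_cases lam
  · exact le_trans (eps1_abs_le k i) one_le_two
  · exact eps2_abs_le k i

lemma c_abs_le (k : R3) (lam : Fin 2) (j : Fin 3) :
    |cross (‖k‖⁻¹ • k) (eps k lam) j| ≤ 4 := by
  have h1 := khat_abs_le k
  have h2 := eps_abs_le k lam
  have key : ∀ a b c d : ℝ, |a| ≤ 1 → |b| ≤ 2 → |c| ≤ 1 → |d| ≤ 2 →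
      |a * b - c * d| ≤ 4 := by
    intro a b c d ha hb hc hd
    calc |a * b - c * d| ≤ |a * b| + |c * d| := abs_sub _ _
    _ = |a| * |b| + |c| * |d| := by rw [abs_mul, abs_mul]
    _ ≤ 1 * 2 + 1 * 2 := by
        gcongr <;> first | exact abs_nonneg _ | assumption
    _ = 4 := by norm_num
  fin_cases j
  · show |cross (‖k‖⁻¹ • k) (eps k lam) 0| ≤ 4
    rw [cross_apply0]; exact key _ _ _ _ (h1 1) (h2 2) (h1 2) (h2 1)
  · show |cross (‖k‖⁻¹ • k) (eps k lam) 1| ≤ 4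
    rw [cross_apply1]; exact key _ _ _ _ (h1 2) (h2 0) (h1 0) (h2 2)
  · show |cross (‖k‖⁻¹ • k) (eps k lam) 2| ≤ 4
    rw [cross_apply2]; exact key _ _ _ _ (h1 0) (h2 1) (h1 1) (h2 0)

lemma sum_cc (k : R3) (hk : 0 < k 0 ^ 2 + k 1 ^ 2) (j j' : Fin 3) (hjj' : j ≠ j') :
    cross (‖k‖⁻¹ • k) (eps k 0) j * cross (‖k‖⁻¹ • k) (eps k 0) j'
      + cross (‖k‖⁻¹ • k) (eps k 1) j * cross (‖k‖⁻¹ • k) (eps k 1) j'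
    = -(k j * k j') / ‖k‖ ^ 2 := by
  have hn2 := norm_sq_eq k
  have hnpos := norm_pos_of_perp k hk
  have hn : ‖k‖ ≠ 0 := ne_of_gt hnpos
  have hr2 : Real.sqrt (k 0 ^ 2 + k 1 ^ 2) ^ 2 = k 0 ^ 2 + k 1 ^ 2 :=
    Real.sq_sqrt (by positivity)
  have hr : Real.sqrt (k 0 ^ 2 + k 1 ^ 2) ≠ 0 := by
    intro h; rw [h] at hr2; simp at hr2; nlinarith
  set r := Real.sqrt (k 0 ^ 2 + k 1 ^ 2) with hrdef
  have e20 : eps2 k 0 = ‖k‖⁻¹ * r⁻¹ * (k 0 * k 2) := by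
    rw [eps2, cross_apply0, smul_apply3, smul_apply3, eps1_apply2, eps1_apply1]; ring
  have e21 : eps2 k 1 = ‖k‖⁻¹ * r⁻¹ * (k 1 * k 2) := by
    rw [eps2, cross_apply1, smul_apply3, smul_apply3, eps1_apply0, eps1_apply2]; ring
  have e22 : eps2 k 2 = ‖k‖⁻¹ * r⁻¹ * (-(k 0 ^ 2 + k 1 ^ 2)) := by
    rw [eps2, cross_apply2, smul_apply3, smul_apply3, eps1_apply0, eps1_apply1]; ring
  have c10 : cross (‖k‖⁻¹ • k) (eps2 k) 0 = -(r⁻¹ * k 1) := by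
    rw [cross_apply0, smul_apply3, smul_apply3, e21, e22]
    field_simp
    linear_combination (k 1) * hn2
  have c11 : cross (‖k‖⁻¹ • k) (eps2 k) 1 = r⁻¹ * k 0 := by
    rw [cross_apply1, smul_apply3, smul_apply3, e20, e22]
    field_simp
    linear_combination (-(k 0)) * hn2
  have c12 : cross (‖k‖⁻¹ • k) (eps2 k) 2 = 0 := by
    rw [cross_apply2, smul_apply3, smul_apply3, e20, e21]; ring
  have case01 : eps2 k 0 * eps2 k 1
      + cross (‖k‖⁻¹ • k) (eps2 k) 0 * cross (‖k‖⁻¹ • k) (eps2 k) 1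
      = -(k 0 * k 1) / ‖k‖ ^ 2 := by
    rw [e20, e21, c10, c11]; field_simp
    linear_combination (k 0 * k 1) * hr2 - (k 0 * k 1) * hn2
  have case02 : eps2 k 0 * eps2 k 2
      + cross (‖k‖⁻¹ • k) (eps2 k) 0 * cross (‖k‖⁻¹ • k) (eps2 k) 2
      = -(k 0 * k 2) / ‖k‖ ^ 2 := by
    rw [e20, e22, c10, c12]; field_simp
    linear_combination (k 0 * k 2) * hr2
  have case12 : eps2 k 1 * eps2 k 2
      + cross (‖k‖⁻¹ • k) (eps2 k) 1 * cross (‖k‖⁻¹ • k) (eps2 k) 2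
      = -(k 1 * k 2) / ‖k‖ ^ 2 := by
    rw [e21, e22, c11, c12]; field_simp
    linear_combination (k 1 * k 2) * hr2
  have hcross1 : ∀ i, cross (‖k‖⁻¹ • k) (eps1 k) i = eps2 k i := fun _ => rfl
  have heps0 : eps k 0 = eps1 k := rfl
  have heps1 : eps k 1 = eps2 k := rfl
  rw [heps0, heps1, hcross1, hcross1]
  fin_cases j <;> fin_cases j' <;> first
    | exact absurd rfl hjj'
    | exact case01 | exact case02 | exact case12
    | (rw [mul_comm (eps2 k _) (eps2 k _),
           mul_comm (cross (‖k‖⁻¹ • k) (eps2 k) _) (cross (‖k‖⁻¹ • k) (eps2 k) _),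
           mul_comm (k _) (k _)]
       first | exact case01 | exact case02 | exact case12)

lemma hB_prod (Λ : ℝ) (k : R3) (lam : Fin 2) (j j' : Fin 3) :
    (starRingEnd ℂ) (hB Λ 0 k lam j) * hB Λ 0 k lam j' =
      (((1 / (2 * Real.pi))^2 *
        (‖k‖ ^ ((1 : ℝ) / 2) * chi Λ k * cross (‖k‖⁻¹ • k) (eps k lam) j) *
        (‖k‖ ^ ((1 : ℝ) / 2) * chi Λ k * cross (‖k‖⁻¹ • k) (eps k lam) j') : ℝ) : ℂ) := by
  have h0 : (inner ℝ k (0 : R3) : ℝ) = 0 := inner_zero_right k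
  rw [hB, hB, h0]
  simp only [Complex.ofReal_zero, mul_zero, Complex.exp_zero, mul_one, map_mul, map_neg,
    map_div₀, Complex.conj_I, Complex.conj_ofReal]
  push_cast
  ring_nf
  rw [Complex.I_sq]
  ring

lemma inner_vec (k : R3) (P₃ : ℝ) : (inner ℝ k (vec 0 0 P₃) : ℝ) = k 2 * P₃ := by
  simp [PiLp.inner_apply, Fin.sum_univ_three, vec, RCLike.inner_apply]
  ring

lemma sqrt_half_sq (k : R3) : ‖k‖ ^ ((1 : ℝ) / 2) * ‖k‖ ^ ((1 : ℝ) / 2) = ‖k‖ := by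
  rw [← Real.rpow_add' (norm_nonneg k) (by norm_num)]
  norm_num

/-- The real form of the summand integrand. -/
def fr (M Λ P₃ σ : ℝ) (lam : Fin 2) (j j' : Fin 3) (k : R3) : ℝ :=
  (if σ ≤ ‖k‖ then (1 : ℝ) else 0) *
    ((1 / (2 * Real.pi))^2 *
      (‖k‖ ^ ((1 : ℝ) / 2) * chi Λ k * cross (‖k‖⁻¹ • k) (eps k lam) j) *
      (‖k‖ ^ ((1 : ℝ) / 2) * chi Λ k * cross (‖k‖⁻¹ • k) (eps k lam) j')) /
    (‖k‖ - (inner ℝ k (vec 0 0 P₃) : ℝ) / M + ‖k‖ ^ 2 / (2 * M))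

lemma F_eq_fr (M Λ P₃ σ : ℝ) (lam : Fin 2) (j j' : Fin 3) (k : R3) :
    (if σ ≤ ‖k‖ then (1 : ℂ) else 0) *
        ((starRingEnd ℂ) (hB Λ 0 k lam j) * hB Λ 0 k lam j') /
        ((‖k‖ - (inner ℝ k (vec 0 0 P₃) : ℝ) / M + ‖k‖ ^ 2 / (2 * M) : ℝ) : ℂ)
      = ((fr M Λ P₃ σ lam j j' k : ℝ) : ℂ) := by
  have hite : (if σ ≤ ‖k‖ then (1 : ℂ) else 0)
      = (((if σ ≤ ‖k‖ then (1 : ℝ) else 0) : ℝ) : ℂ) := by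
    split_ifs <;> simp
  rw [hite, hB_prod, fr]
  norm_cast

lemma chi_abs_le (Λ : ℝ) (k : R3) : |chi Λ k| ≤ 1 := by
  rw [chi]; split_ifs <;> norm_num

/-- Measurability of the real integrand. -/
lemma fr_measurable (M Λ P₃ σ : ℝ) (lam : Fin 2) (j j' : Fin 3) :
    Measurable (fr M Λ P₃ σ lam j j') := by
  have mcoord : ∀ i : Fin 3, Measurable fun k : R3 => k i := fun i => (measurable_pi_apply i).comp (WithLp.measurable_ofLp 2 (Fin 3 → ℝ))
  have mnorm : Measurable fun k : R3 => ‖k‖ := measurable_norm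
  have msqrt : Measurable fun k : R3 => (Real.sqrt (k 0 ^ 2 + k 1 ^ 2))⁻¹ :=
    (((mcoord 0).pow_const 2).add ((mcoord 1).pow_const 2)).sqrt.inv
  have meps1 : ∀ i, Measurable fun k : R3 => eps1 k i := by
    intro i; fin_cases i
    · show Measurable fun k : R3 => eps1 k 0
      simp only [eps1_apply0]; exact msqrt.mul (mcoord 1)
    · show Measurable fun k : R3 => eps1 k 1
      simp only [eps1_apply1]; exact msqrt.mul (mcoord 0).neg
    · show Measurable fun k : R3 => eps1 k 2
      simp only [eps1_apply2]; exact msqrt.mul measurable_const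
  have mkh : ∀ i, Measurable fun k : R3 => (‖k‖⁻¹ • k) i := by
    intro i
    simp only [smul_apply3]
    exact mnorm.inv.mul (mcoord i)
  have meps2 : ∀ i, Measurable fun k : R3 => eps2 k i := by
    intro i; fin_cases i
    · show Measurable fun k : R3 => eps2 k 0
      simp only [show ∀ k : R3, eps2 k 0
          = (‖k‖⁻¹ • k) 1 * eps1 k 2 - (‖k‖⁻¹ • k) 2 * eps1 k 1 from fun _ => rfl]
      exact ((mkh 1).mul (meps1 2)).sub ((mkh 2).mul (meps1 1))
    · show Measurable fun k : R3 => eps2 k 1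
      simp only [show ∀ k : R3, eps2 k 1
          = (‖k‖⁻¹ • k) 2 * eps1 k 0 - (‖k‖⁻¹ • k) 0 * eps1 k 2 from fun _ => rfl]
      exact ((mkh 2).mul (meps1 0)).sub ((mkh 0).mul (meps1 2))
    · show Measurable fun k : R3 => eps2 k 2
      simp only [show ∀ k : R3, eps2 k 2
          = (‖k‖⁻¹ • k) 0 * eps1 k 1 - (‖k‖⁻¹ • k) 1 * eps1 k 0 from fun _ => rfl]
      exact ((mkh 0).mul (meps1 1)).sub ((mkh 1).mul (meps1 0))
  have meps : ∀ (lam : Fin 2) (i : Fin 3), Measurable fun k : R3 => eps k lam i := by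
    intro lam i; fin_cases lam
    · exact meps1 i
    · exact meps2 i
  have mc : ∀ (lam : Fin 2) (i : Fin 3),
      Measurable fun k : R3 => cross (‖k‖⁻¹ • k) (eps k lam) i := by
    intro lam i; fin_cases i
    · show Measurable fun k : R3 => cross (‖k‖⁻¹ • k) (eps k lam) 0
      simp only [cross_apply0]
      exact ((mkh 1).mul (meps lam 2)).sub ((mkh 2).mul (meps lam 1))
    · show Measurable fun k : R3 => cross (‖k‖⁻¹ • k) (eps k lam) 1
      simp only [cross_apply1]
      exact ((mkh 2).mul (meps lam 0)).sub ((mkh 0).mul (meps lam 2))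
    · show Measurable fun k : R3 => cross (‖k‖⁻¹ • k) (eps k lam) 2
      simp only [cross_apply2]
      exact ((mkh 0).mul (meps lam 1)).sub ((mkh 1).mul (meps lam 0))
  have mchi : Measurable fun k : R3 => chi Λ k := by
    simp only [chi]
    exact Measurable.ite (measurableSet_le measurable_norm measurable_const)
      measurable_const measurable_const
  have mrpow : Measurable fun k : R3 => ‖k‖ ^ ((1 : ℝ) / 2) :=
    ((Real.continuous_rpow_const (by norm_num)).measurable).comp mnorm
  have mite : Measurable fun k : R3 => (if σ ≤ ‖k‖ then (1 : ℝ) else 0) :=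
    Measurable.ite (measurableSet_le measurable_const measurable_norm)
      measurable_const measurable_const
  have mD : Measurable fun k : R3 =>
      ‖k‖ - (inner ℝ k (vec 0 0 P₃) : ℝ) / M + ‖k‖ ^ 2 / (2 * M) := by
    simp only [inner_vec]
    exact (mnorm.sub (((mcoord 2).mul measurable_const).div_const M)).add
      ((mnorm.pow_const 2).div_const (2 * M))
  exact (mite.mul ((measurable_const.mul ((mrpow.mul mchi).mul (mc lam j))).mul
    ((mrpow.mul mchi).mul (mc lam j')))).div mD

/-- Integrability of the real integrand. -/
lemma fr_integrable (M Λ P₃ σ : ℝ) (hM : 0 < M) (hP : |P₃| < M)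
    (lam : Fin 2) (j j' : Fin 3) :
    MeasureTheory.Integrable (fr M Λ P₃ σ lam j j') := by
  set δ : ℝ := 1 - |P₃| / M with hδdef
  have hδpos : 0 < δ := by
    rw [hδdef, sub_pos, div_lt_one hM]; exact hP
  set C : ℝ := (1 / (2 * Real.pi))^2 * 16 / δ with hCdef
  have hC0 : 0 ≤ C := by positivity
  have hbound : ∀ k : R3, ‖fr M Λ P₃ σ lam j j' k‖ ≤
      Set.indicator (Metric.closedBall (0 : R3) Λ) (fun _ => C) k := by
    intro k
    rw [Real.norm_eq_abs]
    by_cases hkΛ : ‖k‖ ≤ Λ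
    · have hmem : k ∈ Metric.closedBall (0 : R3) Λ := by
        simpa [Metric.mem_closedBall, dist_zero_right] using hkΛ
      rw [Set.indicator_of_mem hmem]
      rcases eq_or_lt_of_le (norm_nonneg k) with h0 | h0
      · have hs : ‖k‖ ^ ((1 : ℝ) / 2) = 0 := by
          rw [← h0]; exact Real.zero_rpow (by norm_num)
        rw [fr, hs]
        simpa using hC0
      · -- positive norm
        have hinner := inner_vec k P₃
        have h1 : k 2 * P₃ ≤ ‖k‖ * |P₃| := by
          calc k 2 * P₃ ≤ |k 2 * P₃| := le_abs_self _
          _ = |k 2| * |P₃| := abs_mul _ _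
          _ ≤ ‖k‖ * |P₃| := mul_le_mul_of_nonneg_right (coord_abs_le k 2) (abs_nonneg _)
        have hD : ‖k‖ * δ ≤ ‖k‖ - (inner ℝ k (vec 0 0 P₃) : ℝ) / M + ‖k‖ ^ 2 / (2 * M) := by
          rw [hinner, hδdef]
          have h2 : k 2 * P₃ / M ≤ ‖k‖ * |P₃| / M := by
            exact div_le_div_of_nonneg_right h1 hM.le |>.trans_eq rfl
          have h3 : 0 ≤ ‖k‖ ^ 2 / (2 * M) := by positivity
          have : ‖k‖ * (1 - |P₃| / M) = ‖k‖ - ‖k‖ * |P₃| / M := by ring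
          rw [this]
          linarith
        have hDpos : 0 < ‖k‖ - (inner ℝ k (vec 0 0 P₃) : ℝ) / M + ‖k‖ ^ 2 / (2 * M) :=
          lt_of_lt_of_le (by positivity) hD
        have hs0 : 0 ≤ ‖k‖ ^ ((1 : ℝ) / 2) := Real.rpow_nonneg (norm_nonneg k) _
        have hs2 := sqrt_half_sq k
        -- numerator bound
        have hnum : |(if σ ≤ ‖k‖ then (1 : ℝ) else 0) *
            ((1 / (2 * Real.pi))^2 *
              (‖k‖ ^ ((1 : ℝ) / 2) * chi Λ k * cross (‖k‖⁻¹ • k) (eps k lam) j) *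
              (‖k‖ ^ ((1 : ℝ) / 2) * chi Λ k * cross (‖k‖⁻¹ • k) (eps k lam) j'))|
            ≤ (1 / (2 * Real.pi))^2 * 16 * ‖k‖ := by
          have hx : ∀ jj : Fin 3,
              |‖k‖ ^ ((1 : ℝ) / 2) * chi Λ k * cross (‖k‖⁻¹ • k) (eps k lam) jj|
                ≤ ‖k‖ ^ ((1 : ℝ) / 2) * 4 := by
            intro jj
            rw [abs_mul, abs_mul]
            calc |‖k‖ ^ ((1 : ℝ) / 2)| * |chi Λ k| * |cross (‖k‖⁻¹ • k) (eps k lam) jj|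
                ≤ ‖k‖ ^ ((1 : ℝ) / 2) * 1 * 4 := by
                  rw [abs_of_nonneg hs0]
                  gcongr
                  · exact chi_abs_le Λ k
                  · exact c_abs_le k lam jj
            _ = ‖k‖ ^ ((1 : ℝ) / 2) * 4 := by ring
          have hite : |(if σ ≤ ‖k‖ then (1 : ℝ) else 0)| ≤ 1 := by
            split_ifs <;> norm_num
          rw [abs_mul, abs_mul, abs_mul]
          calc |(if σ ≤ ‖k‖ then (1 : ℝ) else 0)| * (|(1 / (2 * Real.pi))^2| *
              |‖k‖ ^ ((1 : ℝ) / 2) * chi Λ k * cross (‖k‖⁻¹ • k) (eps k lam) j| *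
              |‖k‖ ^ ((1 : ℝ) / 2) * chi Λ k * cross (‖k‖⁻¹ • k) (eps k lam) j'|)
              ≤ 1 * (|(1 / (2 * Real.pi))^2| * (‖k‖ ^ ((1 : ℝ) / 2) * 4) *
                (‖k‖ ^ ((1 : ℝ) / 2) * 4)) := by
                gcongr <;> first | exact hite | exact hx j | exact hx j'
          _ = (1 / (2 * Real.pi))^2 * 16 * (‖k‖ ^ ((1 : ℝ) / 2) * ‖k‖ ^ ((1 : ℝ) / 2)) := by
                rw [abs_of_nonneg (by positivity : (0:ℝ) ≤ (1 / (2 * Real.pi))^2)]; ring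
          _ = (1 / (2 * Real.pi))^2 * 16 * ‖k‖ := by rw [hs2]
        rw [fr, abs_div, abs_of_pos hDpos]
        calc |(if σ ≤ ‖k‖ then (1 : ℝ) else 0) *
            ((1 / (2 * Real.pi))^2 *
              (‖k‖ ^ ((1 : ℝ) / 2) * chi Λ k * cross (‖k‖⁻¹ • k) (eps k lam) j) *
              (‖k‖ ^ ((1 : ℝ) / 2) * chi Λ k * cross (‖k‖⁻¹ • k) (eps k lam) j'))| /
            (‖k‖ - (inner ℝ k (vec 0 0 P₃) : ℝ) / M + ‖k‖ ^ 2 / (2 * M))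
            ≤ ((1 / (2 * Real.pi))^2 * 16 * ‖k‖) / (‖k‖ * δ) := by
              apply div_le_div₀ (by positivity) hnum (by positivity) hD
        _ = C := by
              rw [hCdef]
              field_simp
    · -- ‖k‖ > Λ : the integrand vanishes
      have hchi : chi Λ k = 0 := by rw [chi, if_neg hkΛ]
      rw [fr, hchi]
      simpa using Set.indicator_nonneg (fun _ _ => hC0) k
  apply MeasureTheory.Integrable.mono'
      (g := Set.indicator (Metric.closedBall (0 : R3) Λ) fun _ => C)
  · rw [MeasureTheory.integrable_indicator_iff measurableSet_closedBall]
    exact MeasureTheory.integrableOn_const MeasureTheory.measure_closedBall_lt_top.ne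
  · exact (fr_measurable M Λ P₃ σ lam j j').aestronglyMeasurable
  · exact Filter.Eventually.of_forall hbound

/-- The summed (over `λ`) real integrand. -/
def gf (M Λ P₃ σ : ℝ) (j j' : Fin 3) (k : R3) : ℝ :=
  (if σ ≤ ‖k‖ then (1 : ℝ) else 0) *
    ((1 / (2 * Real.pi))^2 * ‖k‖ * chi Λ k ^ 2 * (-(k j * k j') / ‖k‖ ^ 2)) /
    (‖k‖ - k 2 * P₃ / M + ‖k‖ ^ 2 / (2 * M))

lemma fr_sum_eq (M Λ P₃ σ : ℝ) (j j' : Fin 3) (hjj' : j ≠ j') (k : R3)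
    (hk : 0 < k 0 ^ 2 + k 1 ^ 2) :
    fr M Λ P₃ σ 0 j j' k + fr M Λ P₃ σ 1 j j' k = gf M Λ P₃ σ j j' k := by
  rw [fr, fr, gf, inner_vec, ← add_div]
  congr 1
  have hs := sqrt_half_sq k
  have hsum := sum_cc k hk j j' hjj'
  split_ifs with h
  · rw [one_mul, one_mul, one_mul]
    linear_combination ((1 / (2 * Real.pi))^2 * (‖k‖ ^ ((1:ℝ)/2) * chi Λ k)^2) * hsum
      + ((1 / (2 * Real.pi))^2 * chi Λ k ^ 2 * (-(k j * k j') / ‖k‖ ^ 2)) * hs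
  · simp

/-- Reflection of the `m`-th coordinate, as a linear isometry equivalence. -/
def negc (m : Fin 3) : R3 ≃ₗᵢ[ℝ] R3 :=
  LinearIsometryEquiv.piLpCongrRight 2
    (fun i => if i = m then LinearIsometryEquiv.neg ℝ else LinearIsometryEquiv.refl ℝ ℝ)

lemma negc_apply (m : Fin 3) (k : R3) (i : Fin 3) :
    negc m k i = if i = m then -(k i) else k i := by
  rw [negc, LinearIsometryEquiv.piLpCongrRight_apply]
  show (if i = m then LinearIsometryEquiv.neg ℝ else LinearIsometryEquiv.refl ℝ ℝ) (k i) = _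
  split_ifs <;> simp

lemma gf_neg (M Λ P₃ σ : ℝ) (j j' m : Fin 3) (hm2 : m ≠ 2)
    (hflip : ∀ k : R3, negc m k j * negc m k j' = -(k j * k j')) (k : R3) :
    gf M Λ P₃ σ j j' (negc m k) = - gf M Λ P₃ σ j j' k := by
  have hnorm : ‖negc m k‖ = ‖k‖ := (negc m).norm_map k
  have hchi : chi Λ (negc m k) = chi Λ k := by rw [chi, chi, hnorm]
  have h2 : negc m k 2 = k 2 := by rw [negc_apply, if_neg (Ne.symm hm2)]
  rw [gf, gf, hnorm, hchi, h2, hflip]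
  ring

lemma gf_integral_zero (M Λ P₃ σ : ℝ) (j j' m : Fin 3) (hm2 : m ≠ 2)
    (hflip : ∀ k : R3, negc m k j * negc m k j' = -(k j * k j')) :
    ∫ k : R3, gf M Λ P₃ σ j j' k = 0 := by
  have h1 : ∫ k : R3, gf M Λ P₃ σ j j' (negc m k) = ∫ k : R3, gf M Λ P₃ σ j j' k :=
    (negc m).measurePreserving.integral_comp
      (negc m).toHomeomorph.measurableEmbedding _
  have h2 : ∫ k : R3, gf M Λ P₃ σ j j' (negc m k) = - ∫ k : R3, gf M Λ P₃ σ j j' k := by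
    simp_rw [gf_neg M Λ P₃ σ j j' m hm2 hflip]
    exact MeasureTheory.integral_neg _
  linarith [h1.symm.trans h2]



open MeasureTheory in
/-- For `P = (0,0,P₃)` along the third axis and `j ≠ j'`, the off-diagonal integral
`Σ_{λ=1,2} ∫ 1_{|k|≥σ} conj(h^B_j(0,k,λ)) h^B_{j'}(0,k,λ) / (|k| − (k·P)/M + |k|²/(2M)) dk`
vanishes, the integrand being Lebesgue integrable. -/
theorem offdiagonal_hB_integral_zero (M Λ P₃ σ : ℝ) (hM : 0 < M) (hΛ : 0 < Λ)
    (hP : |P₃| < M) (hσ0 : 0 ≤ σ) (hσΛ : σ ≤ Λ) (j j' : Fin 3) (hjj' : j ≠ j') :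
    (∀ lam : Fin 2,
      Integrable (fun k : R3 =>
        (if σ ≤ ‖k‖ then (1 : ℂ) else 0) *
          ((starRingEnd ℂ) (hB Λ 0 k lam j) * hB Λ 0 k lam j') /
          ((‖k‖ - (inner ℝ k (vec 0 0 P₃) : ℝ) / M + ‖k‖ ^ 2 / (2 * M) : ℝ) : ℂ))) ∧
    (∑ lam : Fin 2,
      ∫ k : R3,
        (if σ ≤ ‖k‖ then (1 : ℂ) else 0) *
          ((starRingEnd ℂ) (hB Λ 0 k lam j) * hB Λ 0 k lam j') /
          ((‖k‖ - (inner ℝ k (vec 0 0 P₃) : ℝ) / M + ‖k‖ ^ 2 / (2 * M) : ℝ) : ℂ)) = 0 := by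
  have hInt : ∀ lam : Fin 2,
      MeasureTheory.Integrable (fun k : R3 =>
        (if σ ≤ ‖k‖ then (1 : ℂ) else 0) *
          ((starRingEnd ℂ) (hB Λ 0 k lam j) * hB Λ 0 k lam j') /
          ((‖k‖ - (inner ℝ k (vec 0 0 P₃) : ℝ) / M + ‖k‖ ^ 2 / (2 * M) : ℝ) : ℂ)) := by
    intro lam
    have heq : (fun k : R3 =>
        (if σ ≤ ‖k‖ then (1 : ℂ) else 0) *
          ((starRingEnd ℂ) (hB Λ 0 k lam j) * hB Λ 0 k lam j') /
          ((‖k‖ - (inner ℝ k (vec 0 0 P₃) : ℝ) / M + ‖k‖ ^ 2 / (2 * M) : ℝ) : ℂ))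
        = fun k : R3 => ((fr M Λ P₃ σ lam j j' k : ℝ) : ℂ) :=
      funext (F_eq_fr M Λ P₃ σ lam j j')
    rw [heq]
    exact (fr_integrable M Λ P₃ σ hM hP lam j j').ofReal
  refine ⟨hInt, ?_⟩
  -- the reflected coordinate
  set m : Fin 3 := if j = 2 then j' else j with hmdef
  have hm2 : m ≠ 2 := by
    rw [hmdef]; split_ifs with h
    · rw [← h]; exact hjj'.symm
    · exact h
  have hflip : ∀ k : R3, negc m k j * negc m k j' = -(k j * k j') := by
    intro k
    by_cases h : j = 2
    · have hm : m = j' := by rw [hmdef, if_pos h]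
      have hjm : j ≠ m := by rw [hm]; exact hjj'
      rw [negc_apply, negc_apply, if_neg hjm, if_pos hm.symm]
      ring
    · have hm : m = j := by rw [hmdef, if_neg h]
      have hj'm : j' ≠ m := by rw [hm]; exact hjj'.symm
      rw [negc_apply, negc_apply, if_pos hm.symm, if_neg hj'm]
      ring
  -- the bad set is null
  have hnull : MeasureTheory.volume {k : R3 | ¬ 0 < k 0 ^ 2 + k 1 ^ 2} = 0 := by
    have hsub : {k : R3 | ¬ 0 < k 0 ^ 2 + k 1 ^ 2} ⊆
        (LinearMap.ker ((EuclideanSpace.proj (0 : Fin 3) : R3 →L[ℝ] ℝ) :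
          R3 →ₗ[ℝ] ℝ) : Submodule ℝ R3) := by
      intro k hk
      have h1 : k 0 ^ 2 + k 1 ^ 2 ≤ 0 := le_of_not_gt hk
      have h2 : k 0 = 0 := by nlinarith [sq_nonneg (k 0), sq_nonneg (k 1)]
      exact LinearMap.mem_ker.mpr h2
    refine MeasureTheory.measure_mono_null hsub ?_
    apply MeasureTheory.Measure.addHaar_submodule
    intro htop
    have hmem : EuclideanSpace.single (0 : Fin 3) (1 : ℝ) ∈
        (LinearMap.ker ((EuclideanSpace.proj (0 : Fin 3) : R3 →L[ℝ] ℝ) :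
          R3 →ₗ[ℝ] ℝ) : Submodule ℝ R3) := by
      rw [htop]; trivial
    have : EuclideanSpace.single (0 : Fin 3) (1 : ℝ) 0 = 0 := LinearMap.mem_ker.mp hmem
    simp at this
  have hae : ∀ᵐ k : R3 ∂MeasureTheory.volume, 0 < k 0 ^ 2 + k 1 ^ 2 := by
    rw [MeasureTheory.ae_iff]; exact hnull
  rw [Fin.sum_univ_two, ← MeasureTheory.integral_add (hInt 0) (hInt 1)]
  have hcongr : (fun k : R3 =>
      (if σ ≤ ‖k‖ then (1 : ℂ) else 0) *
        ((starRingEnd ℂ) (hB Λ 0 k 0 j) * hB Λ 0 k 0 j') /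
        ((‖k‖ - (inner ℝ k (vec 0 0 P₃) : ℝ) / M + ‖k‖ ^ 2 / (2 * M) : ℝ) : ℂ) +
      (if σ ≤ ‖k‖ then (1 : ℂ) else 0) *
        ((starRingEnd ℂ) (hB Λ 0 k 1 j) * hB Λ 0 k 1 j') /
        ((‖k‖ - (inner ℝ k (vec 0 0 P₃) : ℝ) / M + ‖k‖ ^ 2 / (2 * M) : ℝ) : ℂ))
      =ᵐ[MeasureTheory.volume] fun k : R3 => ((gf M Λ P₃ σ j j' k : ℝ) : ℂ) := by
    filter_upwards [hae] with k hk
    rw [F_eq_fr, F_eq_fr, ← Complex.ofReal_add, fr_sum_eq M Λ P₃ σ j j' hjj' k hk]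
  rw [MeasureTheory.integral_congr_ae hcongr]
  have h := integral_ofReal (𝕜 := ℂ) (μ := (MeasureTheory.volume : MeasureTheory.Measure R3))
    (f := gf M Λ P₃ σ j j')
  rw [gf_integral_zero M Λ P₃ σ j j' m hm2 hflip] at h
  simpa using h
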